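/- Corollary S2 / Theorem 2 (equality of the evidence lower bounds for R = 1). Let observations y_1,…,y_T ∈ ℝ and define L = Σ_{t=1}^T ∫ q(x_t) log N(y_t | C·x_t, Ω) dx_t − ∫ q(x_0) log(q(x_0)/N(x_0|μ_0,Q_0)) dx_0 − ∫ q(f_M) log(q(f_M)/N_M(f_M|0,K_MM)) df_M, where q(x_t) is the GPSSM marginal q(x_t) = ∫ q(x_0) q(f_M) ∏_{t'=0}^{t−1} p(x_{t'+1}|x_{t'},f_M) df_M dx_0⋯dx_{t−1}; define L_Δ analogously with the Δ-quantities (marginals q^Δ(x_j), emission N(y_j | C^Δ x_j, Ω^Δ), priors N(x_0|μ^Δ_0,Q^Δ_0) and N_M(f_M|0,K^Δ_MM)) and J = T/R. If R = 1 and the parameters are set as m^Δ_0 = m_0, S^Δ_0 = S_0, m^Δ_M = m_M, S^Δ_M = S_M, Q^Δ = Q/Δt, K^Δ_MM = K_MM, K^Δ_{xM} = K_{xM}/Δt, K^Δ_{xx} = K_{xx}/Δt² for all x, and additionally μ^Δ_0 = μ_0, Q^Δ_0 = Q_0, C^Δ = C, Ω^Δ = Ω, then L = L_Δ. -/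
import Mathlib


open MeasureTheory Matrix

/-- Scalar Gaussian density `N(x | μ, σ²)`. -/
noncomputable def gauss (x μ σ2 : ℝ) : ℝ :=
  (Real.sqrt (2 * Real.pi * σ2))⁻¹ * Real.exp (-(x - μ) ^ 2 / (2 * σ2))

/-- Multivariate Gaussian density `N_M(v | m, S)` on `ℝ^M`. -/
noncomputable def gaussM {M : ℕ} (v m : Fin M → ℝ) (S : Matrix (Fin M) (Fin M) ℝ) : ℝ :=
  (Real.sqrt ((2 * Real.pi) ^ M * S.det))⁻¹ *
    Real.exp (-(1 / 2) * ((v - m) ⬝ᵥ (S⁻¹ *ᵥ (v - m))))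

/-- The state path `x_0, …, x_{t-1}, x_t, x_t, …` built from `xs : Fin t → ℝ`
(the variables of integration `x_0, …, x_{t-1}`) and the final value `xt = x_t`. -/
def path (t : ℕ) (xs : Fin t → ℝ) (xt : ℝ) : ℕ → ℝ :=
  fun i => if h : i < t then xs ⟨i, h⟩ else xt

/-- GPSSM data: kernel `k`, inducing inputs `z`, process noise `Q`,
variational parameters `mM, SM` (inducing outputs) and `m0, S0` (initial state). -/
structure GPSSM (M : ℕ) where
  k : ℝ → ℝ → ℝ
  z : Fin M → ℝ
  Q : ℝ
  mM : Fin M → ℝ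
  SM : Matrix (Fin M) (Fin M) ℝ
  m0 : ℝ
  S0 : ℝ

namespace GPSSM

variable {M : ℕ} (g : GPSSM M)

/-- `K_MM`, the kernel matrix of the inducing inputs. -/
noncomputable def KMM : Matrix (Fin M) (Fin M) ℝ :=
  Matrix.of fun a b => g.k (g.z a) (g.z b)

/-- `K_{xM}`, the vector of kernel evaluations between a state `x` and the inducing inputs. -/
noncomputable def KxM (x : ℝ) : Fin M → ℝ := fun a => g.k x (g.z a)

/-- Transition variance `Q + K_xx - K_{xM} K_MM⁻¹ K_{xM}ᵀ`. -/
noncomputable def transVar (x : ℝ) : ℝ :=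
  g.Q + g.k x x - g.KxM x ⬝ᵥ (g.KMM⁻¹ *ᵥ g.KxM x)

/-- Transition density `p(x' | x, f_M)`. -/
noncomputable def trans (x' x : ℝ) (f : Fin M → ℝ) : ℝ :=
  gauss x' (x + g.KxM x ⬝ᵥ (g.KMM⁻¹ *ᵥ f)) (g.transVar x)

/-- `μ̃(x) = x + K_{xM} K_MM⁻¹ m_M`. -/
noncomputable def muT (x : ℝ) : ℝ := x + g.KxM x ⬝ᵥ (g.KMM⁻¹ *ᵥ g.mM)

/-- `S̃_{a,b}` as a function of the state path. -/
noncomputable def Stl (x : ℕ → ℝ) (a b : ℕ) : ℝ :=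
  g.KxM (x a) ⬝ᵥ (g.KMM⁻¹ *ᵥ (g.SM *ᵥ (g.KMM⁻¹ *ᵥ g.KxM (x b)))) +
    if a = b then g.transVar (x a) else 0

/-- The block matrix `S̃_{0:s-1,0:s-1}` of size `s`. -/
noncomputable def blockS (x : ℕ → ℝ) (s : ℕ) : Matrix (Fin s) (Fin s) ℝ :=
  Matrix.of fun a b => g.Stl x a b

/-- Conditional mean `μ̂_{s+1} = μ̃_s + S̃_{s,0:s-1} (S̃_{0:s-1,0:s-1})⁻¹ (x_{1:s} − μ̃_{0:s-1})`
(for `s = 0` the correction term is empty and this is `μ̃_0`). -/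
noncomputable def condMean (x : ℕ → ℝ) (s : ℕ) : ℝ :=
  g.muT (x s) +
    (fun i : Fin s => g.Stl x s i) ⬝ᵥ
      ((g.blockS x s)⁻¹ *ᵥ fun i : Fin s => x ((i : ℕ) + 1) - g.muT (x i))

/-- Conditional variance
`Σ̂_{s+1} = S̃_{s,s} − S̃_{s,0:s-1} (S̃_{0:s-1,0:s-1})⁻¹ S̃_{0:s-1,s}`. -/
noncomputable def condVar (x : ℕ → ℝ) (s : ℕ) : ℝ :=
  g.Stl x s s -
    (fun i : Fin s => g.Stl x s i) ⬝ᵥ ((g.blockS x s)⁻¹ *ᵥ fun i : Fin s => g.Stl x i s)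

/-- The matrix `K_{0:t-1,M} ∈ ℝ^{t×M}` whose `a`-th row is `K_{x_a M}`. -/
noncomputable def Pmat (x : ℕ → ℝ) (t : ℕ) : Matrix (Fin t) (Fin M) ℝ :=
  Matrix.of fun a j => g.k (x a) (g.z j)

/-- The residual vector `x_{1:t} − μ̃_{0:t-1}`. -/
noncomputable def resid (x : ℕ → ℝ) (t : ℕ) : Fin t → ℝ :=
  fun i => x ((i : ℕ) + 1) - g.muT (x i)

/-- Conditional mean of the inducing outputs given `x_0, …, x_t`:
`μ̂^t_M = m_M + S_M K_MM⁻¹ (K_{0:t-1,M})ᵀ (S̃_{0:t-1,0:t-1})⁻¹ (x_{1:t} − μ̃_{0:t-1})`. -/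
noncomputable def muHatM (x : ℕ → ℝ) (t : ℕ) : Fin M → ℝ :=
  g.mM + (g.SM * g.KMM⁻¹ * (g.Pmat x t)ᵀ) *ᵥ ((g.blockS x t)⁻¹ *ᵥ g.resid x t)

/-- Conditional covariance of the inducing outputs given `x_0, …, x_t`:
`Σ̂^t_M = S_M − S_M K_MM⁻¹ (K_{0:t-1,M})ᵀ (S̃_{0:t-1,0:t-1})⁻¹ K_{0:t-1,M} K_MM⁻¹ S_M`. -/
noncomputable def SigHatM (x : ℕ → ℝ) (t : ℕ) : Matrix (Fin M) (Fin M) ℝ :=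
  g.SM - g.SM * g.KMM⁻¹ * (g.Pmat x t)ᵀ * (g.blockS x t)⁻¹ * g.Pmat x t * g.KMM⁻¹ * g.SM

end GPSSM

/-- SDE-discretization data in interdomain form: the kernel quantities
`K^Δ_MM`, `K^Δ_{xM}`, `K^Δ_xx` are given directly as functions, together with `Δt`,
the integer resolution `R`, the diffusion parameter `Q^Δ`, and the variational
parameters `mM, SM` (inducing outputs) and `m0, S0` (initial state). -/
structure SDEF (M : ℕ) where
  KMM : Matrix (Fin M) (Fin M) ℝ
  KxM : ℝ → Fin M → ℝ
  Kxx : ℝ → ℝ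
  dt : ℝ
  R : ℕ
  Q : ℝ
  mM : Fin M → ℝ
  SM : Matrix (Fin M) (Fin M) ℝ
  m0 : ℝ
  S0 : ℝ

namespace SDEF

variable {M : ℕ} (s : SDEF M)

/-- The step size `R·Δt`. -/
noncomputable def rho : ℝ := (s.R : ℝ) * s.dt

/-- Euler–Maruyama transition variance
`RΔt·Q^Δ + (RΔt)²(K^Δ_xx − K^Δ_{xM} (K^Δ_MM)⁻¹ (K^Δ_{xM})ᵀ)`. -/
noncomputable def transVar (x : ℝ) : ℝ :=
  s.rho * s.Q + s.rho ^ 2 * (s.Kxx x - s.KxM x ⬝ᵥ (s.KMM⁻¹ *ᵥ s.KxM x))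

/-- Euler–Maruyama transition density `p^Δ(x' | x, f_M)`. -/
noncomputable def trans (x' x : ℝ) (f : Fin M → ℝ) : ℝ :=
  gauss x' (x + s.rho * (s.KxM x ⬝ᵥ (s.KMM⁻¹ *ᵥ f))) (s.transVar x)

end SDEF

/-- The GPSSM variational marginal `q(x_t)` (inducing outputs and previous states
integrated out). -/
noncomputable def GPSSM.marg {M : ℕ} (g : GPSSM M) (t : ℕ) (xt : ℝ) : ℝ :=
  ∫ f : Fin M → ℝ, ∫ xs : Fin t → ℝ,
    gauss (path t xs xt 0) g.m0 g.S0 * gaussM f g.mM g.SM *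
      ∏ t' ∈ Finset.range t, g.trans (path t xs xt (t' + 1)) (path t xs xt t') f

/-- The SDE variational marginal `q^Δ(x_j)` (inducing outputs and previous states
integrated out). -/
noncomputable def SDEF.marg {M : ℕ} (s : SDEF M) (j : ℕ) (xj : ℝ) : ℝ :=
  ∫ f : Fin M → ℝ, ∫ xs : Fin j → ℝ,
    gauss (path j xs xj 0) s.m0 s.S0 * gaussM f s.mM s.SM *
      ∏ j' ∈ Finset.range j, s.trans (path j xs xj (j' + 1)) (path j xs xj j') f

/-- **Corollary S2 / Theorem 2** (equality of the evidence lower bounds for `R = 1`).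
With the interdomain parameter settings `m^Δ_0 = m_0`, `S^Δ_0 = S_0`, `m^Δ_M = m_M`,
`S^Δ_M = S_M`, `Q^Δ = Q/Δt`, `K^Δ_MM = K_MM`, `K^Δ_{xM} = K_{xM}/Δt`,
`K^Δ_{xx} = K_{xx}/Δt²`, `μ^Δ_0 = μ_0`, `Q^Δ_0 = Q_0`, `C^Δ = C`, `Ω^Δ = Ω` and `R = 1`
(so `J = T/R = T`), the two evidence lower bounds coincide: `L = L_Δ`. -/
theorem sde_gpssm_elbo_equality
    {M T : ℕ} (g : GPSSM M) (s : SDEF M)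
    (y : ℕ → ℝ)                -- observations y_1, …, y_T
    (C Ω μ0 Q0 : ℝ)            -- GPSSM emission and initial-state prior parameters
    (CΔ ΩΔ μ0Δ Q0Δ : ℝ)        -- SDE emission and initial-state prior parameters
    (hdt : 0 < s.dt) (hQ : 0 < g.Q) (hS0 : 0 < g.S0) (hΩ : 0 < Ω) (hQ0 : 0 < Q0)
    (hΩΔ : 0 < ΩΔ) (hQ0Δ : 0 < Q0Δ)
    (hKMM : g.KMM.PosDef) (hSM : g.SM.PosDef)
    (htrans : ∀ x : ℝ, 0 < g.transVar x)
    (hstrans : ∀ x : ℝ, 0 < s.transVar x)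
    -- parameter settings
    (hR : s.R = 1)
    (hm0 : s.m0 = g.m0) (hS0' : s.S0 = g.S0)
    (hmM : s.mM = g.mM) (hSM' : s.SM = g.SM)
    (hQ' : s.Q = g.Q / s.dt)
    (hKMM' : s.KMM = g.KMM)
    (hKxM : ∀ x : ℝ, s.KxM x = fun a => g.k x (g.z a) / s.dt)
    (hKxx : ∀ x : ℝ, s.Kxx x = g.k x x / s.dt ^ 2)
    (hμ0Δ : μ0Δ = μ0) (hQ0Δ' : Q0Δ = Q0) (hCΔ : CΔ = C) (hΩΔ' : ΩΔ = Ω) :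
    ((∑ t ∈ Finset.Icc 1 T,
        ∫ xt : ℝ, g.marg t xt * Real.log (gauss (y t) (C * xt) Ω))
      - (∫ x0 : ℝ, gauss x0 g.m0 g.S0 * Real.log (gauss x0 g.m0 g.S0 / gauss x0 μ0 Q0))
      - ∫ f : Fin M → ℝ,
          gaussM f g.mM g.SM * Real.log (gaussM f g.mM g.SM / gaussM f 0 g.KMM))
    = ((∑ j ∈ Finset.Icc 1 (T / s.R),
          ∫ xj : ℝ, s.marg j xj * Real.log (gauss (y j) (CΔ * xj) ΩΔ))
        - (∫ x0 : ℝ, gauss x0 s.m0 s.S0 * Real.log (gauss x0 s.m0 s.S0 / gauss x0 μ0Δ Q0Δ))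
        - ∫ f : Fin M → ℝ,
            gaussM f s.mM s.SM * Real.log (gaussM f s.mM s.SM / gaussM f 0 s.KMM)) := by
  have hdt' : s.dt ≠ 0 := ne_of_gt hdt
  have hKxM' : ∀ x, s.KxM x = s.dt⁻¹ • g.KxM x := by
    intro x; rw [hKxM x]; funext a
    simp [GPSSM.KxM, div_eq_inv_mul]
  have hrho : s.rho = s.dt := by simp [SDEF.rho, hR]
  have hvar : ∀ x, s.transVar x = g.transVar x := by
    intro x
    simp only [SDEF.transVar, GPSSM.transVar, hrho, hQ', hKxx, hKxM', hKMM',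
      Matrix.mulVec_smul, smul_dotProduct, dotProduct_smul, smul_eq_mul]
    field_simp
    ring
  have htr : ∀ x' x f, s.trans x' x f = g.trans x' x f := by
    intro x' x f
    simp only [SDEF.trans, GPSSM.trans, hvar, hrho, hKxM', hKMM',
      smul_dotProduct, smul_eq_mul]
    rw [mul_inv_cancel_left₀ hdt']
  have hmarg : ∀ j xj, s.marg j xj = g.marg j xj := by
    intro j xj
    unfold SDEF.marg GPSSM.marg
    simp only [hm0, hS0', hmM, hSM', htr]
  rw [hR]
  simp only [hmarg, hm0, hS0', hmM, hSM', hKMM', hμ0Δ, hQ0Δ', hCΔ, hΩΔ', Nat.div_one]
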